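/- Let n ∈ ℕ, b ∈ K, and define G(x,y) = -y·(n-1)!·Σ_{ν=0}^{n-1} (-1)^{n+ν} (n+b-ν+1)_ν x^ν/ν! + (b+1)_n x^n. Then x(1-x)·∂G/∂x + y(n + b x + y)·∂G/∂y = (n - n x + y)·G, i.e., {G = 0} is an invariant algebraic curve of the system ẋ = x(1-x), ẏ = y(n + b x + y), with cofactor n - n x + y. -/

import Mathlib

open MvPolynomial

/-- Pochhammer symbol `(c)_n = c(c+1)⋯(c+n-1)`. -/
noncomputable def poch (c : ℝ) (n : ℕ) : ℝ := ∏ i ∈ Finset.range n, (c + i)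

/-- The polynomial `F(x,y) = y (n-1)! Σ_{ν=0}^{n-1} (-1)^{n+ν} (n+b-ν+1)_ν x^ν/ν! + (b+1)_n x^n`,
with `x = X 0`, `y = X 1`. -/
noncomputable def LVF (n : ℕ) (b : ℝ) : MvPolynomial (Fin 2) ℝ :=
  C ((Nat.factorial (n - 1) : ℝ)) * X 1 *
      ∑ ν ∈ Finset.range n,
        C ((-1) ^ (n + ν) * poch ((n : ℝ) + b - ν + 1) ν / (Nat.factorial ν : ℝ)) * X 0 ^ ν
    + C (poch (b + 1) n) * X 0 ^ n

/-- The polynomial `G` of Proposition 3 (sign-flipped `y`-part of `F`). -/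
noncomputable def LVG (n : ℕ) (b : ℝ) : MvPolynomial (Fin 2) ℝ :=
  -(C ((Nat.factorial (n - 1) : ℝ)) * X 1 *
      ∑ ν ∈ Finset.range n,
        C ((-1) ^ (n + ν) * poch ((n : ℝ) + b - ν + 1) ν / (Nat.factorial ν : ℝ)) * X 0 ^ ν)
    + C (poch (b + 1) n) * X 0 ^ n

lemma poch_succ' (c : ℝ) (k : ℕ) : poch c (k + 1) = c * poch (c + 1) k := by
  unfold poch
  rw [Finset.prod_range_succ']
  rw [mul_comm]
  congr 1
  · norm_num
  · exact Finset.prod_congr rfl fun i _ => by push_cast; ring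

noncomputable def lvA (m : ℕ) (b : ℝ) (ν : ℕ) : ℝ :=
  (-1) ^ (m + 1 + ν) * poch (((m + 1 : ℕ) : ℝ) + b - ν + 1) ν / (Nat.factorial ν : ℝ)

noncomputable def lvS (m : ℕ) (b : ℝ) : MvPolynomial (Fin 2) ℝ :=
  ∑ ν ∈ Finset.range (m + 1), C (lvA m b ν) * X 0 ^ ν

noncomputable def lvE (m : ℕ) (b : ℝ) : MvPolynomial (Fin 2) ℝ :=
  ∑ ν ∈ Finset.range (m + 1), C (lvA m b ν * ν) * X 0 ^ ν

lemma LVG_eq (m : ℕ) (b : ℝ) :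
    LVG (m + 1) b = -(C ((Nat.factorial m : ℝ)) * X 1 * lvS m b)
      + C (poch (b + 1) (m + 1)) * X 0 ^ (m + 1) := by
  simp only [LVG, lvS, lvA, Nat.add_sub_cancel]

lemma pderiv0_X0_pow (k : ℕ) :
    pderiv (0 : Fin 2) ((X 0 : MvPolynomial (Fin 2) ℝ) ^ (k + 1)) =
      C (((k + 1 : ℕ) : ℝ)) * X 0 ^ k := by
  rw [pderiv_pow, pderiv_X_self, mul_one, Nat.add_sub_cancel]
  simp

lemma lv_pd1 (m : ℕ) (b : ℝ) : pderiv (1 : Fin 2) (lvS m b) = 0 := by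
  unfold lvS
  rw [map_sum]
  refine Finset.sum_eq_zero fun ν _ => ?_
  rw [pderiv_C_mul, pderiv_pow, pderiv_X_of_ne (by decide)]
  ring

lemma lv_pd0 (m : ℕ) (b : ℝ) : X 0 * pderiv (0 : Fin 2) (lvS m b) = lvE m b := by
  unfold lvS lvE
  rw [map_sum, Finset.mul_sum]
  refine Finset.sum_congr rfl fun ν _ => ?_
  cases ν with
  | zero => simp
  | succ k =>
      rw [pderiv_C_mul, pderiv0_X0_pow, map_mul]
      ring

lemma lv_recA (m ν : ℕ) (b : ℝ) :
    lvA m b (ν + 1) * (((ν + 1 : ℕ) : ℝ)) + lvA m b ν * (b + ((m + 1 : ℕ) : ℝ) - ν) = 0 := by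
  unfold lvA
  have h1 : ((m + 1 : ℕ) : ℝ) + b - ((ν + 1 : ℕ) : ℝ) + 1 = ((m + 1 : ℕ) : ℝ) + b - ν := by
    push_cast; ring
  rw [h1, poch_succ']
  rw [show m + 1 + (ν + 1) = (m + 1 + ν) + 1 from rfl, pow_succ, Nat.factorial_succ]
  have hν : ((Nat.factorial ν : ℝ)) ≠ 0 := Nat.cast_ne_zero.2 (Nat.factorial_ne_zero ν)
  have hν1 : ((ν : ℝ) + 1) ≠ 0 := by positivity
  field_simp
  push_cast; ring

lemma lv_recB (m : ℕ) (b : ℝ) :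
    (Nat.factorial m : ℝ) * (lvA m b m * (b + ((m + 1 : ℕ) : ℝ) - m)) + poch (b + 1) (m + 1) = 0 := by
  unfold lvA
  have h1 : ((m + 1 : ℕ) : ℝ) + b - m + 1 = (b + 1) + 1 := by push_cast; ring
  have h2 : (-1 : ℝ) ^ (m + 1 + m) = -1 := by
    rw [show m + 1 + m = 2 * m + 1 by ring, pow_succ, pow_mul]
    norm_num
  rw [h1, h2, poch_succ' (b + 1) m]
  have hm : ((Nat.factorial m : ℝ)) ≠ 0 := Nat.cast_ne_zero.2 (Nat.factorial_ne_zero m)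
  field_simp
  push_cast; ring

lemma lv_key (m : ℕ) (b : ℝ) :
    C ((Nat.factorial m : ℝ)) * ((1 - X 0) * lvE m b
        + (C b + C (((m + 1 : ℕ) : ℝ))) * (X 0 * lvS m b))
      + C (poch (b + 1) (m + 1)) * X 0 ^ (m + 1) = 0 := by
  have e1 : lvE m b = ∑ ν ∈ Finset.range m,
      C (lvA m b (ν + 1) * (((ν + 1 : ℕ) : ℝ))) * X 0 ^ (ν + 1) := by
    unfold lvE
    rw [Finset.sum_range_succ']
    simp
  have e2 : (C b + C (((m + 1 : ℕ) : ℝ))) * (X 0 * lvS m b) - X 0 * lvE m b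
      = ∑ ν ∈ Finset.range (m + 1),
          C (lvA m b ν * (b + ((m + 1 : ℕ) : ℝ) - ν)) * X 0 ^ (ν + 1) := by
    unfold lvS lvE
    simp only [Finset.mul_sum]
    rw [← Finset.sum_sub_distrib]
    refine Finset.sum_congr rfl fun ν _ => ?_
    simp only [map_mul, map_sub, map_add]
    ring
  have hz : (∑ ν ∈ Finset.range m,
        C (lvA m b (ν + 1) * (((ν + 1 : ℕ) : ℝ))) * X 0 ^ (ν + 1))
      + ∑ ν ∈ Finset.range m,
          C (lvA m b ν * (b + ((m + 1 : ℕ) : ℝ) - ν)) * X 0 ^ (ν + 1)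
      = (0 : MvPolynomial (Fin 2) ℝ) := by
    rw [← Finset.sum_add_distrib]
    refine Finset.sum_eq_zero fun ν _ => ?_
    rw [← add_mul, ← map_add, lv_recA]
    simp
  have z2 : C ((Nat.factorial m : ℝ)) * C (lvA m b m * (b + ((m + 1 : ℕ) : ℝ) - m))
      + C (poch (b + 1) (m + 1)) = (0 : MvPolynomial (Fin 2) ℝ) := by
    rw [← map_mul, ← map_add, lv_recB]
    simp
  have hsplit : C ((Nat.factorial m : ℝ)) * ((1 - X 0) * lvE m b
        + (C b + C (((m + 1 : ℕ) : ℝ))) * (X 0 * lvS m b))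
      + C (poch (b + 1) (m + 1)) * X 0 ^ (m + 1)
      = C ((Nat.factorial m : ℝ)) * (lvE m b
          + ((C b + C (((m + 1 : ℕ) : ℝ))) * (X 0 * lvS m b) - X 0 * lvE m b))
        + C (poch (b + 1) (m + 1)) * X 0 ^ (m + 1) := by ring
  rw [hsplit, e2, Finset.sum_range_succ, e1]
  linear_combination (C ((Nat.factorial m : ℝ)) : MvPolynomial (Fin 2) ℝ) * hz
    + ((X 0 : MvPolynomial (Fin 2) ℝ) ^ (m + 1)) * z2

/-- `{G = 0}` is an invariant algebraic curve of `ẋ = x(1-x)`, `ẏ = y(n+bx+y)`,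
with cofactor `n - nx + y`. -/
theorem LVG_invariant (n : ℕ) (b : ℝ) (hn : 1 ≤ n) :
    X 0 * (1 - X 0) * pderiv (0 : Fin 2) (LVG n b)
        + X 1 * (C (n : ℝ) + C b * X 0 + X 1) * pderiv (1 : Fin 2) (LVG n b) =
      (C (n : ℝ) - C (n : ℝ) * X 0 + X 1) * LVG n b := by
  obtain ⟨m, rfl⟩ : ∃ m, n = m + 1 := ⟨n - 1, (Nat.succ_pred_eq_of_pos hn).symm⟩
  have hG := LVG_eq m b
  have hd1 : pderiv (1 : Fin 2) (LVG (m + 1) b)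
      = -(C ((Nat.factorial m : ℝ)) * lvS m b) := by
    rw [hG, map_add, map_neg, pderiv_mul, pderiv_mul, pderiv_C, pderiv_X_self,
      pderiv_C_mul, pderiv_pow, pderiv_X_of_ne (by decide), lv_pd1]
    ring
  have hd0 : pderiv (0 : Fin 2) (LVG (m + 1) b)
      = -(C ((Nat.factorial m : ℝ)) * X 1 * pderiv (0 : Fin 2) (lvS m b))
        + C (poch (b + 1) (m + 1)) * (C (((m + 1 : ℕ) : ℝ)) * X 0 ^ m) := by
    rw [hG, map_add, map_neg, pderiv_mul, pderiv_mul, pderiv_C,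
      pderiv_X_of_ne (by decide), pderiv_C_mul, pderiv0_X0_pow]
    ring
  rw [hd0, hd1, hG]
  linear_combination (-(C ((Nat.factorial m : ℝ)) * X 1 * (1 - X 0))) * (lv_pd0 m b)
    + (-(X 1)) * (lv_key m b)
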